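/- arXiv:2509.06008 — 2 statements merged into one kernel-verified Lean document; each statement's English description precedes it below -/
import Mathlib

section
/- Let ℓ be an even positive integer, k > 0, n ≥ 2, and ξ ∈ ℝⁿ ∖ {0} with |ξ| ≤ (ℓ+1)k. Let e₁ = ξ/|ξ| and e₂ a unit vector orthogonal to e₁, and define ζ^± = ((|ξ|−k)/ℓ) e₁ ± √(k² − ((|ξ|−k)/ℓ)²) e₂. Set ζ₀ = k e₁, and let ζ₁,…,ζ_ℓ alternate ζ⁺, ζ⁻, …, ζ⁺, ζ⁻ (ℓ/2 copies each). Then ζ₀·ζ₀ = k², ζ_j·ζ_j = k² for each j ∈ {1,…,ℓ}, and ζ₀ + Σ_{j=1}^{ℓ} ζ_j = ξ. -/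
open Finset

private lemma alt_sum {M : Type*} [AddCommMonoid M] (x y : M) (m : ℕ) :
    ∑ j ∈ Finset.range (2 * m), (if j % 2 = 0 then x else y) = m • (x + y) := by
  induction m with
  | zero => simp
  | succ m ih =>
    have h : 2 * (m + 1) = (2 * m + 1) + 1 := by ring
    rw [h, Finset.sum_range_succ, Finset.sum_range_succ, ih]
    have h1 : (2 * m) % 2 = 0 := by omega
    have h2 : (2 * m + 1) % 2 = 1 := by omega
    simp only [h1, h2, if_true, if_pos, one_ne_zero, if_false, succ_nsmul]
    abel

set_option maxHeartbeats 1000000 in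
theorem stmt_7 (n ℓ : ℕ) (hn : 2 ≤ n) (hℓ : Even ℓ) (hℓpos : 0 < ℓ)
    (k : ℝ) (hk : 0 < k)
    (ξ e₂ : EuclideanSpace ℝ (Fin n)) (hξ : ξ ≠ 0)
    (hξk : ‖ξ‖ ≤ ((ℓ : ℝ) + 1) * k)
    (he₂ : ‖e₂‖ = 1) (horth : (inner ℝ ξ e₂ : ℝ) = 0)
    (e₁ : EuclideanSpace ℝ (Fin n)) (he₁ : e₁ = ‖ξ‖⁻¹ • ξ)
    (ζp ζm : EuclideanSpace ℝ (Fin n))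
    (hζp : ζp = ((‖ξ‖ - k) / (ℓ : ℝ)) • e₁
        + Real.sqrt (k ^ 2 - ((‖ξ‖ - k) / (ℓ : ℝ)) ^ 2) • e₂)
    (hζm : ζm = ((‖ξ‖ - k) / (ℓ : ℝ)) • e₁
        - Real.sqrt (k ^ 2 - ((‖ξ‖ - k) / (ℓ : ℝ)) ^ 2) • e₂)
    (ζ₀ : EuclideanSpace ℝ (Fin n)) (hζ₀ : ζ₀ = k • e₁)
    (ζ : Fin ℓ → EuclideanSpace ℝ (Fin n))
    (hζ : ∀ j : Fin ℓ, ζ j = if (j : ℕ) % 2 = 0 then ζp else ζm) :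
    (inner ℝ ζ₀ ζ₀ : ℝ) = k ^ 2 ∧
    (∀ j : Fin ℓ, (inner ℝ (ζ j) (ζ j) : ℝ) = k ^ 2) ∧
    ζ₀ + ∑ j, ζ j = ξ := by
  have hnorm : ‖ξ‖ ≠ 0 := norm_ne_zero_iff.mpr hξ
  have hnormpos : 0 < ‖ξ‖ := norm_pos_iff.mpr hξ
  have hℓR : (0 : ℝ) < (ℓ : ℝ) := by exact_mod_cast hℓpos
  set a : ℝ := (‖ξ‖ - k) / (ℓ : ℝ) with ha
  set s : ℝ := Real.sqrt (k ^ 2 - a ^ 2) with hs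
  have he11 : (inner ℝ e₁ e₁ : ℝ) = 1 := by
    rw [he₁, real_inner_smul_left, real_inner_smul_right, real_inner_self_eq_norm_sq]
    field_simp
  have he12 : (inner ℝ e₁ e₂ : ℝ) = 0 := by
    rw [he₁, real_inner_smul_left, horth, mul_zero]
  have he21 : (inner ℝ e₂ e₁ : ℝ) = 0 := by rw [real_inner_comm]; exact he12
  have he22 : (inner ℝ e₂ e₂ : ℝ) = 1 := by
    rw [real_inner_self_eq_norm_sq, he₂, one_pow]
  have hanonneg : k ^ 2 - a ^ 2 ≥ 0 := by
    have h1 : a ≤ k := by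
      rw [ha, div_le_iff₀ hℓR]
      nlinarith
    have hℓ1 : (1:ℝ) ≤ (ℓ:ℝ) := by exact_mod_cast hℓpos
    have h2 : -k ≤ a := by
      rw [ha, le_div_iff₀ hℓR]
      nlinarith
    nlinarith
  have hs2 : s ^ 2 = k ^ 2 - a ^ 2 := Real.sq_sqrt hanonneg
  clear_value a s
  have hζ0 : (inner ℝ ζ₀ ζ₀ : ℝ) = k ^ 2 := by
    rw [hζ₀, real_inner_smul_left, real_inner_smul_right, he11]
    ring
  have hinnerp : (inner ℝ ζp ζp : ℝ) = k ^ 2 := by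
    rw [hζp]
    simp only [inner_add_left, inner_add_right, real_inner_smul_left,
      real_inner_smul_right, he11, he12, he21, he22]
    nlinarith [hs2]
  have hinnerm : (inner ℝ ζm ζm : ℝ) = k ^ 2 := by
    rw [hζm]
    simp only [inner_sub_left, inner_sub_right, real_inner_smul_left,
      real_inner_smul_right, he11, he12, he21, he22]
    nlinarith [hs2]
  refine ⟨hζ0, fun j => ?_, ?_⟩
  · rw [hζ j]
    split <;> [exact hinnerp; exact hinnerm]
  · obtain ⟨m, hm⟩ := hℓ
    have hm2 : ℓ = 2 * m := by omega
    have hsum : ∑ j, ζ j = m • (ζp + ζm) := by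
      have : ∑ j : Fin ℓ, ζ j
          = ∑ j ∈ Finset.range ℓ, (if j % 2 = 0 then ζp else ζm) := by
        rw [← Fin.sum_univ_eq_sum_range]
        exact Finset.sum_congr rfl fun j _ => hζ j
      rw [this, hm2, alt_sum]
    have hpm : ζp + ζm = (2 * a) • e₁ := by
      rw [hζp, hζm, two_mul, add_smul]
      abel
    rw [hsum, hpm, hζ₀, ← Nat.cast_smul_eq_nsmul ℝ, smul_smul, ← add_smul]
    have hka : k + (m : ℝ) * (2 * a) = ‖ξ‖ := by
      rw [ha]
      have hc : (ℓ : ℝ) = 2 * (m : ℝ) := by exact_mod_cast hm2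
      have hm0 : (m : ℝ) ≠ 0 := by
        have : 0 < m := by omega
        positivity
      field_simp [hc]
      rw [hc]
      ring
    rw [hka, he₁, smul_smul, mul_inv_cancel₀ hnorm, one_smul]
end

section
/- Let ℓ ≥ 1 and m > ℓ. For complex numbers w₁,…,w_ℓ and coefficients c₁,…,c_m (constants), define P(u) = Σ_{ℓ'=1}^{m} c_{ℓ'} u^{ℓ'}. Then (1/ℓ!) Σ over nonempty S ⊆ {1,…,ℓ} of (−1)^{ℓ−|S|} P(Σ_{j∈S} w_j) = (c_ℓ + Σ_{a=1}^{m−ℓ} c_{ℓ+a} Q_{ℓ,a}(w₁,…,w_ℓ)) · ∏_{j=1}^{ℓ} w_j. -/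
open Finset

lemma IE {n : ℕ} (T : Finset (Fin n)) :
    ∑ S ∈ (univ : Finset (Fin n)).powerset, (if T ⊆ S then ((-1:ℂ)^(n - S.card)) else 0)
      = if T = univ then 1 else 0 := by
  have key : ∑ S ∈ (univ : Finset (Fin n)).powerset, (if T ⊆ S then ((-1:ℂ)^(n - S.card)) else 0)
      = ∑ U ∈ Tᶜ.powerset, (-1:ℂ)^U.card := by
    rw [← Finset.sum_filter]
    apply Finset.sum_nbij' (fun S => Sᶜ) (fun U => Uᶜ)
    · intro S hS
      simp only [mem_filter, mem_powerset] at hS ⊢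
      exact fun i hi => by simpa using fun h => absurd (hS.2 h) (by simpa using hi)
    · intro U hU
      simp only [mem_powerset] at hU
      simp only [mem_filter, mem_powerset]
      refine ⟨subset_univ _, fun i hi => ?_⟩
      by_contra h
      exact absurd (hU (by simpa using h)) (by simpa using hi)
    · intro S _; simp
    · intro U _; simp
    · intro S hS
      congr 1
      rw [Finset.card_compl, Fintype.card_fin]
  rw [key]
  have := Finset.sum_powerset_neg_one_pow_card (x := Tᶜ)
  have h2 : ((∑ m ∈ Tᶜ.powerset, (-1 : ℤ) ^ m.card : ℤ) : ℂ)
      = ∑ m ∈ Tᶜ.powerset, (-1:ℂ)^m.card := by push_cast; ring_nf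
  rw [← h2, this]
  rcases eq_or_ne T univ with h | h
  · simp [h]
  · have : Tᶜ ≠ ∅ := by
      simp only [ne_eq, ← Finset.compl_eq_empty_iff] at *
      simpa using h
    simp [this, h]

lemma multinomial_univ_of_support {n : ℕ} (S : Finset (Fin n)) (k : Fin n → ℕ)
    (h : ∀ i, k i ≠ 0 → i ∈ S) :
    Nat.multinomial S k = Nat.multinomial univ k := by
  unfold Nat.multinomial
  rw [Finset.sum_subset (subset_univ S), Finset.prod_subset (subset_univ S)]
  · intro i _ hi
    have : k i = 0 := by by_contra hk; exact hi (h i hk)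
    simp [this]
  · intro i _ hi
    have : k i = 0 := by by_contra hk; exact hi (h i hk)
    simp [this]

lemma piAntidiag_eq_filter {ℓ n : ℕ} (S : Finset (Fin ℓ)) :
    Finset.piAntidiag S n
      = (Finset.piAntidiag (univ : Finset (Fin ℓ)) n).filter
          (fun k => ∀ i, k i ≠ 0 → i ∈ S) := by
  ext k
  simp only [mem_piAntidiag, mem_filter]
  constructor
  · rintro ⟨h1, h2⟩
    refine ⟨⟨?_, fun i _ => mem_univ i⟩, h2⟩
    rw [← h1, Finset.sum_subset (subset_univ S)]
    intro i _ hi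
    by_contra hk; exact hi (h2 i hk)
  · rintro ⟨⟨h1, _⟩, h2⟩
    refine ⟨?_, h2⟩
    rw [← h1, Finset.sum_subset (subset_univ S)]
    intro i _ hi
    by_contra hk; exact hi (h2 i hk)


lemma lemB {ℓ : ℕ} (w : Fin ℓ → ℂ) (n : ℕ) :
    ∑ S ∈ (univ : Finset (Fin ℓ)).powerset, (-1:ℂ)^(ℓ - S.card) * (∑ j ∈ S, w j)^n
      = ∑ k ∈ (Finset.piAntidiag (univ : Finset (Fin ℓ)) n).filter (fun k => ∀ i, k i ≠ 0),
          (Nat.multinomial univ k : ℂ) * ∏ i, w i ^ k i := by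
  have expand : ∀ S ∈ (univ : Finset (Fin ℓ)).powerset,
      (-1:ℂ)^(ℓ - S.card) * (∑ j ∈ S, w j)^n
        = ∑ k ∈ (Finset.piAntidiag (univ : Finset (Fin ℓ)) n).filter
            (fun k => ∀ i, k i ≠ 0 → i ∈ S),
            (-1:ℂ)^(ℓ - S.card) * ((Nat.multinomial univ k : ℂ) * ∏ i, w i ^ k i) := by
    intro S _
    rw [Finset.sum_pow_eq_sum_piAntidiag, Finset.mul_sum, piAntidiag_eq_filter]
    apply Finset.sum_congr rfl
    intro k hk
    simp only [mem_filter, mem_piAntidiag] at hk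
    rw [multinomial_univ_of_support S k hk.2,
      Finset.prod_subset (subset_univ S) (by
        intro i _ hi
        have : k i = 0 := by by_contra hk'; exact hi (hk.2 i hk')
        simp [this])]
  rw [Finset.sum_congr rfl expand]
  simp_rw [Finset.sum_filter, Finset.sum_comm (s := (univ : Finset (Fin ℓ)).powerset)]
  apply Finset.sum_congr rfl
  intro k hk
  have hIE := IE (univ.filter (fun i => k i ≠ 0))
  have : ∀ S : Finset (Fin ℓ),
      (if ∀ i, k i ≠ 0 → i ∈ S then (-1:ℂ)^(ℓ - S.card) * ((Nat.multinomial univ k : ℂ) * ∏ i, w i ^ k i) else 0)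
      = (if univ.filter (fun i => k i ≠ 0) ⊆ S then ((-1:ℂ)^(ℓ - S.card)) else 0)
          * ((Nat.multinomial univ k : ℂ) * ∏ i, w i ^ k i) := by
    intro S
    have : (univ.filter (fun i => k i ≠ 0) ⊆ S) ↔ (∀ i, k i ≠ 0 → i ∈ S) := by
      constructor
      · intro h i hi; exact h (by simp [hi])
      · intro h i hi; simp only [mem_filter] at hi; exact h i hi.2
    split_ifs with h1 h2 h2 <;> simp_all
  rw [Finset.sum_congr rfl (fun S _ => this S), ← Finset.sum_mul, hIE]
  have huniv : (univ.filter (fun i => k i ≠ 0) = univ) ↔ ∀ i, k i ≠ 0 := by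
    simp [Finset.filter_eq_self]
  split_ifs with h1 h2 h2 <;> simp_all [huniv]

lemma lemD {ℓ n : ℕ} (hn : n < ℓ) :
    (Finset.piAntidiag (univ : Finset (Fin ℓ)) n).filter (fun k => ∀ i, k i ≠ 0)
      = ∅ := by
  ext k
  simp only [mem_filter, mem_piAntidiag, notMem_empty, iff_false, not_and, ne_eq]
  rintro ⟨h1, _⟩ h2
  have : ℓ ≤ n := by
    calc ℓ = ∑ _i : Fin ℓ, 1 := by simp
    _ ≤ ∑ i, k i := Finset.sum_le_sum (fun i _ => Nat.one_le_iff_ne_zero.2 (h2 i))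
    _ = n := h1
  omega

lemma lemC {ℓ : ℕ} (w : Fin ℓ → ℂ) (a : ℕ) :
    ∑ k ∈ (Finset.piAntidiag (univ : Finset (Fin ℓ)) (ℓ + a)).filter (fun k => ∀ i, k i ≠ 0),
        (Nat.multinomial univ k : ℂ) * ∏ i, w i ^ k i
      = (∑ α ∈ Finset.Nat.antidiagonalTuple ℓ a,
          ((Nat.factorial (ℓ + a) : ℂ) / ∏ j, (Nat.factorial (1 + α j) : ℂ)) *
            ∏ j, w j ^ α j) * ∏ j, w j := by
  rw [Finset.sum_mul]
  apply Finset.sum_nbij' (fun k => fun j => k j - 1) (fun α => fun j => α j + 1)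
  · intro k hk
    simp only [mem_filter, mem_piAntidiag, ne_eq] at hk
    rw [Finset.Nat.mem_antidiagonalTuple]
    have : ∀ j, k j - 1 + 1 = k j := fun j => Nat.succ_pred_eq_of_pos (Nat.pos_of_ne_zero (hk.2 j))
    have hs : ∑ j, (k j - 1 + 1) = ℓ + a := by simp_rw [this]; exact hk.1.1
    have h1 : ∑ _j : Fin ℓ, 1 = ℓ := by simp
    rw [Finset.sum_add_distrib, h1] at hs
    omega
  · intro α hα
    rw [Finset.Nat.mem_antidiagonalTuple] at hα
    simp only [mem_filter, mem_piAntidiag, ne_eq]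
    refine ⟨⟨?_, fun i _ => mem_univ i⟩, fun i => by omega⟩
    have h1 : ∑ _j : Fin ℓ, 1 = ℓ := by simp
    rw [Finset.sum_add_distrib, hα, h1]
    omega
  · intro k hk
    simp only [mem_filter] at hk
    funext j
    exact Nat.succ_pred_eq_of_pos (Nat.pos_of_ne_zero (hk.2 j))
  · intro α _; funext j; simp
  · intro k hk
    simp only [mem_filter, mem_piAntidiag, ne_eq] at hk
    have hpos : ∀ j, 1 ≤ k j := fun j => Nat.one_le_iff_ne_zero.2 (hk.2 j)
    have h1 : ∀ j, 1 + (k j - 1) = k j := fun j => by have := hpos j; omega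
    have hcast : (Nat.multinomial univ k : ℂ)
        = (Nat.factorial (ℓ + a) : ℂ) / ∏ j, (Nat.factorial (1 + (k j - 1)) : ℂ) := by
      have spec := Nat.multinomial_spec univ k
      have hsum : ∑ i, k i = ℓ + a := hk.1.1
      rw [hsum] at spec
      have hne : (∏ j, (Nat.factorial (1 + (k j - 1)) : ℂ)) ≠ 0 := by
        apply Finset.prod_ne_zero_iff.2
        intro j _
        exact_mod_cast Nat.factorial_ne_zero _
      rw [eq_div_iff hne]
      simp_rw [h1]
      rw [← Nat.cast_prod, ← Nat.cast_mul, mul_comm]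
      exact_mod_cast spec
    rw [hcast]
    have hprod : ∏ i, w i ^ k i = (∏ j, w j ^ (k j - 1)) * ∏ j, w j := by
      rw [← Finset.prod_mul_distrib]
      apply Finset.prod_congr rfl
      intro j _
      rw [← pow_succ]
      congr 1; have := hpos j; omega
    rw [hprod]; ring


/-- The multivariate polynomial `Q_{ℓ,a}(w₁,…,w_ℓ)` from the paper. -/
noncomputable def Q (ℓ a : ℕ) (w : Fin ℓ → ℂ) : ℂ :=
  ((Nat.factorial ℓ : ℂ))⁻¹ *
    ∑ α ∈ Finset.Nat.antidiagonalTuple ℓ a,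
      ((Nat.factorial (ℓ + a) : ℂ) / ∏ j, (Nat.factorial (1 + α j) : ℂ)) *
        ∏ j, w j ^ α j

lemma Q_zero {ℓ : ℕ} (w : Fin ℓ → ℂ) : Q ℓ 0 w = 1 := by
  unfold Q
  rw [Finset.Nat.antidiagonalTuple_zero_right]
  simp [Nat.factorial_ne_zero]

lemma lemC' {ℓ : ℕ} (w : Fin ℓ → ℂ) (a : ℕ) :
    ∑ k ∈ (Finset.piAntidiag (univ : Finset (Fin ℓ)) (ℓ + a)).filter (fun k => ∀ i, k i ≠ 0),
        (Nat.multinomial univ k : ℂ) * ∏ i, w i ^ k i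
      = ((Nat.factorial ℓ : ℂ) * Q ℓ a w) * ∏ j, w j := by
  rw [lemC]
  unfold Q
  rw [← mul_assoc, mul_inv_cancel₀ (by exact_mod_cast Nat.factorial_ne_zero ℓ), one_mul]

theorem stmt_16 (ℓ m : ℕ) (hℓ : 1 ≤ ℓ) (hm : ℓ < m)
    (w : Fin ℓ → ℂ) (c : ℕ → ℂ)
    (P : ℂ → ℂ) (hP : P = fun u => ∑ ℓ' ∈ Finset.Icc 1 m, c ℓ' * u ^ ℓ') :
    ((Nat.factorial ℓ : ℂ))⁻¹ *
      ∑ S ∈ (Finset.univ : Finset (Fin ℓ)).powerset.filter (fun S => S.Nonempty),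
        (-1 : ℂ) ^ (ℓ - S.card) * P (∑ j ∈ S, w j)
      = (c ℓ + ∑ a ∈ Finset.Icc 1 (m - ℓ), c (ℓ + a) * Q ℓ a w) * ∏ j, w j := by
  subst hP
  -- extend to full powerset
  have hext : ∑ S ∈ (Finset.univ : Finset (Fin ℓ)).powerset.filter (fun S => S.Nonempty),
        (-1 : ℂ) ^ (ℓ - S.card) * ∑ n ∈ Finset.Icc 1 m, c n * (∑ j ∈ S, w j) ^ n
      = ∑ S ∈ (Finset.univ : Finset (Fin ℓ)).powerset,
        (-1 : ℂ) ^ (ℓ - S.card) * ∑ n ∈ Finset.Icc 1 m, c n * (∑ j ∈ S, w j) ^ n := by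
    apply Finset.sum_subset (Finset.filter_subset _ _)
    intro S hS hS'
    have hSe : S = ∅ := by
      simp only [mem_filter, mem_powerset] at hS'
      by_contra h
      exact hS' ⟨subset_univ S, Finset.nonempty_of_ne_empty h⟩
    subst hSe
    have : ∀ n ∈ Finset.Icc 1 m, c n * (∑ j ∈ (∅ : Finset (Fin ℓ)), w j) ^ n = 0 := by
      intro n hn
      rw [Finset.mem_Icc] at hn
      simp [zero_pow (by omega : n ≠ 0)]
    rw [Finset.sum_congr rfl this]
    simp
  rw [hext]
  -- swap sums
  have hswap : ∑ S ∈ (Finset.univ : Finset (Fin ℓ)).powerset,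
        (-1 : ℂ) ^ (ℓ - S.card) * ∑ n ∈ Finset.Icc 1 m, c n * (∑ j ∈ S, w j) ^ n
      = ∑ n ∈ Finset.Icc 1 m, c n *
          ∑ S ∈ (Finset.univ : Finset (Fin ℓ)).powerset,
            (-1 : ℂ) ^ (ℓ - S.card) * (∑ j ∈ S, w j) ^ n := by
    simp_rw [Finset.mul_sum]
    rw [Finset.sum_comm]
    apply Finset.sum_congr rfl
    intro n _
    apply Finset.sum_congr rfl
    intro S _
    ring
  rw [hswap]
  simp_rw [lemB]
  -- drop n < ℓ terms, i.e. restrict to Icc ℓ m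
  have hsub : Finset.Icc ℓ m ⊆ Finset.Icc 1 m := by
    intro n hn; rw [Finset.mem_Icc] at *; omega
  rw [← Finset.sum_subset hsub (by
    intro n hn hn'
    rw [Finset.mem_Icc] at hn
    rw [Finset.mem_Icc] at hn'
    have : n < ℓ := by omega
    rw [lemD this]
    simp)]
  -- reindex n = ℓ + a
  have hre : ∑ n ∈ Finset.Icc ℓ m, c n *
        ∑ k ∈ (Finset.piAntidiag (univ : Finset (Fin ℓ)) n).filter (fun k => ∀ i, k i ≠ 0),
          (Nat.multinomial univ k : ℂ) * ∏ i, w i ^ k i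
      = ∑ a ∈ Finset.Icc 0 (m - ℓ), c (ℓ + a) *
          (((Nat.factorial ℓ : ℂ) * Q ℓ a w) * ∏ j, w j) := by
    apply Finset.sum_nbij' (fun n => n - ℓ) (fun a => ℓ + a)
    · intro n hn; rw [Finset.mem_Icc] at *; omega
    · intro a ha; rw [Finset.mem_Icc] at *; omega
    · intro n hn; rw [Finset.mem_Icc] at hn; omega
    · intro a _; omega
    · intro n hn
      rw [Finset.mem_Icc] at hn
      have h : ℓ + (n - ℓ) = n := by omega
      rw [← lemC' w (n - ℓ), h]
  rw [hre]
  have h0 : (0 : ℕ) ∉ Finset.Icc 1 (m - ℓ) := by simp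
  rw [show Finset.Icc 0 (m - ℓ) = insert 0 (Finset.Icc 1 (m - ℓ)) by
      ext x; simp [Finset.mem_Icc]; omega,
    Finset.sum_insert h0]
  rw [Q_zero, add_zero]
  have hfac : (Nat.factorial ℓ : ℂ) ≠ 0 := by exact_mod_cast Nat.factorial_ne_zero ℓ
  field_simp
  rw [mul_add, Finset.mul_sum]
  congr 1
  · ring
  · exact Finset.sum_congr rfl (fun a _ => by ring)
end
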